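/- Let V, V′ ⊆ ℝ^n each be a 2-dimensional totally nonnegative subspace which is orthodox or deviant, with chosen fundamental dominoes, and let v ∈ V and v′ ∈ V′. Let D be the multiset of nonzero dominoes among the eight entries of Dom_V(v) and Dom_{V′}(v′), so that the sum of the elements of D equals the vector (v + v′) with its n-th coordinate replaced by 0. Then for any I ⊆ {1, …, n}, every I-alternating domino sequence for this sum with respect to D in which every domino of D appears is obtained by shuffling the sequences Dom_V(v) and Dom_{V′}(v′) and deleting all zero dominoes. -/

import Mathlib

/-- `d` is an `i`-domino (0-based indices). -/
def IsDominoAt {n : ℕ} (i : Fin n) (d : Fin n → ℝ) : Prop :=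
  if h : (i : ℕ) + 1 < n then
    0 < d i * d ⟨(i : ℕ) + 1, h⟩ ∧
      ∀ j : Fin n, (j : ℕ) ≠ (i : ℕ) → (j : ℕ) ≠ (i : ℕ) + 1 → d j = 0
  else
    d i ≠ 0 ∧ ∀ j : Fin n, j ≠ i → d j = 0

/-- A nonzero domino. -/
def IsDomino {n : ℕ} (d : Fin n → ℝ) : Prop := ∃ i : Fin n, IsDominoAt i d

/-- A positive domino with index `i`. -/
def IsPosDominoAt {n : ℕ} (i : Fin n) (d : Fin n → ℝ) : Prop :=
  IsDominoAt i d ∧ 0 < d i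

/-- `barVec v` is `v` with its last coordinate replaced by `0`. -/
def barVec {n : ℕ} (v : Fin n → ℝ) : Fin n → ℝ :=
  fun j => if (j : ℕ) = n - 1 then 0 else v j

/-- All maximal minors of `A` are nonnegative. -/
def MinorsNonneg {k n : ℕ} (A : Matrix (Fin k) (Fin n) ℝ) : Prop :=
  ∀ f : Fin k → Fin n, StrictMono f → 0 ≤ (A.submatrix id f).det

/-- All maximal (`a × a`) minors of the `a × n` matrix `Z` are positive. -/
def MinorsPos {a n : ℕ} (Z : Matrix (Fin a) (Fin n) ℝ) : Prop :=
  ∀ f : Fin a → Fin n, StrictMono f → 0 < (Z.submatrix id f).det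

/-- `V` is a `k`-dimensional totally nonnegative subspace of `ℝ^n`. -/
def IsTNNSubspace (k n : ℕ) (V : Submodule ℝ (Fin n → ℝ)) : Prop :=
  ∃ A : Matrix (Fin k) (Fin n) ℝ,
    LinearIndependent ℝ (fun i => A i) ∧
    Submodule.span ℝ (Set.range fun i => A i) = V ∧
    MinorsNonneg A

/-- `V` is orthodox with standard basis vectors `d, e` and fundamental dominoes
`d1, d2, d3, d4`: the `dᵢ` are linearly independent positive dominoes with 0-based
indices `i1 + 1 < i2 ≤ i3 < i4 - 1` and `i4 ≤ n - 3` (1-based: `i_4 ≤ n - 2`),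
`V = span{d, e}`, `d̄ = d1 + d2` with `d` negative in its last coordinate, and
`ē = d3 + d4` with `e` positive in its last coordinate. -/
def OrthodoxWith {n : ℕ} (V : Submodule ℝ (Fin n → ℝ))
    (d e d1 d2 d3 d4 : Fin n → ℝ) : Prop :=
  (∃ i1 i2 i3 i4 : Fin n,
    IsPosDominoAt i1 d1 ∧ IsPosDominoAt i2 d2 ∧ IsPosDominoAt i3 d3 ∧
    IsPosDominoAt i4 d4 ∧
    (i1 : ℕ) + 1 < (i2 : ℕ) ∧ (i2 : ℕ) ≤ (i3 : ℕ) ∧ (i3 : ℕ) + 1 < (i4 : ℕ) ∧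
    (i4 : ℕ) + 3 ≤ n) ∧
  LinearIndependent ℝ ![d1, d2, d3, d4] ∧
  V = Submodule.span ℝ {d, e} ∧
  barVec d = d1 + d2 ∧ (∀ j : Fin n, (j : ℕ) = n - 1 → d j < 0) ∧
  barVec e = d3 + d4 ∧ (∀ j : Fin n, (j : ℕ) = n - 1 → 0 < e j)

/-- `V` is deviant with standard basis vectors `d, e` and fundamental dominoes
`d1, d2, d3, d4`: the `dᵢ` are linearly independent positive dominoes with 0-based
indices `i1 < i2`, `i2 + 1 < i3 ≤ i4 ≤ n - 3` (1-based: `i_4 ≤ n - 2`),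
`V = span{d, e}`, `d̄ = d1 - d4` with `d` negative in its last coordinate, and
`e = d1 + d2 + d3`. -/
def DeviantWith {n : ℕ} (V : Submodule ℝ (Fin n → ℝ))
    (d e d1 d2 d3 d4 : Fin n → ℝ) : Prop :=
  (∃ i1 i2 i3 i4 : Fin n,
    IsPosDominoAt i1 d1 ∧ IsPosDominoAt i2 d2 ∧ IsPosDominoAt i3 d3 ∧
    IsPosDominoAt i4 d4 ∧
    (i1 : ℕ) < (i2 : ℕ) ∧ (i2 : ℕ) + 1 < (i3 : ℕ) ∧ (i3 : ℕ) ≤ (i4 : ℕ) ∧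
    (i4 : ℕ) + 3 ≤ n) ∧
  LinearIndependent ℝ ![d1, d2, d3, d4] ∧
  V = Submodule.span ℝ {d, e} ∧
  barVec d = d1 - d4 ∧ (∀ j : Fin n, (j : ℕ) = n - 1 → d j < 0) ∧
  e = d1 + d2 + d3

/-- `V` is orthodox (for some choice of data). -/
def IsOrthodox {n : ℕ} (V : Submodule ℝ (Fin n → ℝ)) : Prop :=
  ∃ d e d1 d2 d3 d4 : Fin n → ℝ, OrthodoxWith V d e d1 d2 d3 d4

/-- `V` is deviant (for some choice of data). -/
def IsDeviant {n : ℕ} (V : Submodule ℝ (Fin n → ℝ)) : Prop :=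
  ∃ d e d1 d2 d3 d4 : Fin n → ℝ, DeviantWith V d e d1 d2 d3 d4

def NonnegVec {n : ℕ} (d : Fin n → ℝ) : Prop := ∀ j, 0 ≤ d j

def NonposVec {n : ℕ} (d : Fin n → ℝ) : Prop := ∀ j, d j ≤ 0

/-- Two dominoes have opposite signs. -/
def OppSign {n : ℕ} (d e : Fin n → ℝ) : Prop :=
  (NonnegVec d ∧ NonposVec e) ∨ (NonposVec d ∧ NonnegVec e)

/-- `L` is an `I`-alternating domino sequence for `v` with respect to `D`. -/
def IsAltDominoSeq {n : ℕ} (D : Multiset (Fin n → ℝ)) (v : Fin n → ℝ)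
    (I : Finset (Fin n)) (L : List (Fin n → ℝ)) : Prop :=
  L.length = I.card ∧
  (↑L : Multiset (Fin n → ℝ)) ≤ D ∧
  (∀ d ∈ L, IsDomino d) ∧
  (∀ (j : ℕ) (hj : j < L.length) (hj' : j < I.card),
    0 < v (I.orderEmbOfFin rfl ⟨j, hj'⟩) *
        L.get ⟨j, hj⟩ (I.orderEmbOfFin rfl ⟨j, hj'⟩)) ∧
  (∀ (j : ℕ) (h1 : j < L.length) (h2 : j + 1 < L.length),
    OppSign (L.get ⟨j, h1⟩) (L.get ⟨j + 1, h2⟩))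

/-- `Shuffle l1 l2 l`: the list `l` is an interleaving of `l1` and `l2`,
preserving the relative order within each. -/
inductive Shuffle {α : Type*} : List α → List α → List α → Prop
  | nil : Shuffle [] [] []
  | left (a : α) (l1 l2 l : List α) : Shuffle l1 l2 l → Shuffle (a :: l1) l2 (a :: l)
  | right (a : α) (l1 l2 l : List α) : Shuffle l1 l2 l → Shuffle l1 (a :: l2) (a :: l)

/-- The sequence `Dom_V(v) = (α₀ d1, α₁ d2, α₂ d3, α₃ d4)` as a list. -/
def domSeq {n : ℕ} (α : Fin 4 → ℝ) (d1 d2 d3 d4 : Fin n → ℝ) : List (Fin n → ℝ) :=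
  [α 0 • d1, α 1 • d2, α 2 • d3, α 3 • d4]

namespace ShufAux

variable {α : Type*}

theorem shuffle_nil_left (B : List α) : Shuffle [] B B := by
  induction B with
  | nil => exact .nil
  | cons b B ih => exact .right b [] B B ih

theorem shuffle_append (A B : List α) : Shuffle A B (A ++ B) := by
  induction A with
  | nil => simpa using shuffle_nil_left B
  | cons a A ih => exact .left a A B (A ++ B) ih

theorem shuffle_prepend_left (C : List α) {A B M : List α} (h : Shuffle A B M) :
    Shuffle (C ++ A) B (C ++ M) := by
  induction C with
  | nil => simpa using h
  | cons c C ih => exact .left c (C ++ A) B (C ++ M) ih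

theorem shuffle_prepend_right (C : List α) {A B M : List α} (h : Shuffle A B M) :
    Shuffle A (C ++ B) (C ++ M) := by
  induction C with
  | nil => simpa using h
  | cons c C ih => exact .right c A (C ++ B) (C ++ M) ih

theorem shuffle_nil_nil {A B : List α} (h : Shuffle A B []) : A = [] ∧ B = [] := by
  cases h; exact ⟨rfl, rfl⟩

theorem shuffle_cons_inv {A B L : List α} {x : α} (h : Shuffle A B (x :: L)) :
    (∃ A', A = x :: A' ∧ Shuffle A' B L) ∨ (∃ B', B = x :: B' ∧ Shuffle A B' L) := by
  cases h with
  | left a A' B' L' h' => exact .inl ⟨A', rfl, h'⟩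
  | right a A' B' L' h' => exact .inr ⟨B', rfl, h'⟩

/-- Lifting: a shuffle of filtered lists comes from a shuffle of the original lists. -/
theorem shuffle_filter_lift (p : α → Bool) :
    ∀ (L A B : List α), Shuffle (A.filter p) (B.filter p) L →
      ∃ M, Shuffle A B M ∧ M.filter p = L := by
  intro L
  induction L with
  | nil =>
    intro A B h
    obtain ⟨hA, hB⟩ := shuffle_nil_nil h
    exact ⟨A ++ B, shuffle_append A B, by simp [List.filter_append, hA, hB]⟩
  | cons x L ih =>
    intro A B h
    rcases shuffle_cons_inv h with ⟨A', hA, h'⟩ | ⟨B', hB, h'⟩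
    · obtain ⟨A1, A2, hAeq, hA1, hpx, hA2⟩ := List.filter_eq_cons_iff.mp hA
      obtain ⟨M, hM, hMf⟩ := ih A2 B (by rw [hA2]; exact h')
      refine ⟨A1 ++ x :: M, ?_, ?_⟩
      · rw [hAeq]
        exact shuffle_prepend_left A1 (.left x A2 B M hM)
      · simp [List.filter_append, List.filter_eq_nil_iff.mpr hA1, hpx, hMf]
    · obtain ⟨B1, B2, hBeq, hB1, hpx, hB2⟩ := List.filter_eq_cons_iff.mp hB
      obtain ⟨M, hM, hMf⟩ := ih A B2 (by rw [hB2]; exact h')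
      refine ⟨B1 ++ x :: M, ?_, ?_⟩
      · rw [hBeq]
        exact shuffle_prepend_right B1 (.right x A B2 M hM)
      · simp [List.filter_append, List.filter_eq_nil_iff.mpr hB1, hpx, hMf]

end ShufAux

namespace ShufAux
variable {α : Type*}

theorem pair_sub_cons {a b x : α} {l : List α} (h : List.Sublist [a, b] (x :: l)) :
    (a = x ∧ b ∈ l) ∨ List.Sublist [a, b] l := by
  cases h with
  | cons _ h' => exact .inr h'
  | cons_cons _ h' => exact .inl ⟨rfl, List.singleton_sublist.mp h'⟩

theorem sublist_pair_get {b a : α} :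
    ∀ (l : List α), List.Sublist [b, a] l →
      ∃ (r r' : ℕ) (hr : r < l.length) (hr' : r' < l.length), r < r' ∧
        l.get ⟨r, hr⟩ = b ∧ l.get ⟨r', hr'⟩ = a := by
  intro l
  induction l with
  | nil => intro h; exact absurd (List.eq_nil_of_sublist_nil h) (by simp)
  | cons x l ih =>
    intro h
    rcases pair_sub_cons h with ⟨hbx, hal⟩ | h' 
    · obtain ⟨⟨r', hr'⟩, hget⟩ := List.mem_iff_get.mp hal
      exact ⟨0, r' + 1, by simp, by simpa using Nat.succ_lt_succ hr',
        Nat.succ_pos _, hbx.symm, hget⟩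
    · obtain ⟨r, r', hr, hr', hlt, h1, h2⟩ := ih h'
      exact ⟨r + 1, r' + 1, Nat.succ_lt_succ hr, Nat.succ_lt_succ hr',
        Nat.succ_lt_succ hlt, h1, h2⟩

/-- Main combinatorial lemma: a permutation of `A ++ B` with no inversions
relative to `A` nor `B` is a shuffle of `A` and `B`. -/
theorem shuffle_of_no_inversion :
    ∀ (L A B : List α), (↑L : Multiset α) = ↑A + ↑B →
      (∀ a b, List.Sublist [a, b] A → List.Sublist [b, a] L → False) →
      (∀ a b, List.Sublist [a, b] B → List.Sublist [b, a] L → False) →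
      Shuffle A B L := by
  intro L
  induction L with
  | nil =>
    intro A B hm _ _
    have hc := congrArg Multiset.card hm
    simp at hc
    have hA0 : A = [] := List.eq_nil_of_length_eq_zero (by omega)
    have hB0 : B = [] := List.eq_nil_of_length_eq_zero (by omega)
    rw [hA0, hB0]; exact .nil
  | cons x L ih =>
    intro A B hm hA hB
    by_cases hxA : ∃ A', A = x :: A'
    · obtain ⟨A', rfl⟩ := hxA
      refine .left x A' B L (ih A' B ?_ ?_ ?_)
      · have : (x ::ₘ ↑L : Multiset α) = x ::ₘ (↑A' + ↑B) := by
          simpa using hm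
        exact (Multiset.cons_inj_right x).mp this
      · intro a b hab hba
        exact hA a b (List.Sublist.cons x hab) (List.Sublist.cons x hba)
      · intro a b hab hba
        exact hB a b hab (List.Sublist.cons x hba)
    · by_cases hxB : ∃ B', B = x :: B'
      · obtain ⟨B', rfl⟩ := hxB
        refine .right x A B' L (ih A B' ?_ ?_ ?_)
        · have : (x ::ₘ ↑L : Multiset α) = x ::ₘ (↑A + ↑B') := by
            rw [Multiset.cons_coe, hm, ← Multiset.cons_coe, Multiset.add_cons]
          exact (Multiset.cons_inj_right x).mp this
        · intro a b hab hba
          exact hA a b hab (List.Sublist.cons x hba)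
        · intro a b hab hba
          exact hB a b (List.Sublist.cons x hab) (List.Sublist.cons x hba)
      · exfalso
        have hxmem : x ∈ (↑A + ↑B : Multiset α) := by rw [← hm]; simp
        rcases Multiset.mem_add.mp hxmem with hxa | hxb
        · -- x ∈ A but A doesn't start with x
          have hxa' : x ∈ A := by simpa using hxa
          cases A with
          | nil => simp at hxa'
          | cons a A' =>
            have hne : x ≠ a := fun h => hxA ⟨A', by rw [h]⟩
            have hxA' : x ∈ A' := by
              rcases hxa' with _ | h
              · exact absurd rfl hne
              · assumption
            -- [a, x] <+ A, [x, a] <+ L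
            have h1 : List.Sublist [a, x] (a :: A') :=
              List.Sublist.cons₂ a (List.singleton_sublist.mpr hxA')
            have haL : a ∈ L := by
              have : a ∈ (↑(x :: L) : Multiset α) := by
                rw [hm]; simp
              rcases by simpa using this with h | h
              · exact absurd h.symm hne
              · exact h
            exact hA a x h1 (List.Sublist.cons₂ x (List.singleton_sublist.mpr haL))
        · have hxb' : x ∈ B := by simpa using hxb
          cases B with
          | nil => simp at hxb'
          | cons b B' =>
            have hne : x ≠ b := fun h => hxB ⟨B', by rw [h]⟩
            have hxB' : x ∈ B' := by
              rcases hxb' with _ | h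
              · exact absurd rfl hne
              · assumption
            have h1 : List.Sublist [b, x] (b :: B') :=
              List.Sublist.cons₂ b (List.singleton_sublist.mpr hxB')
            have hbL : b ∈ L := by
              have : b ∈ (↑(x :: L) : Multiset α) := by
                rw [hm]; simp
              rcases by simpa using this with h | h
              · exact absurd h.symm hne
              · exact h
            exact hB b x h1 (List.Sublist.cons₂ x (List.singleton_sublist.mpr hbL))

end ShufAux


namespace DomAux

theorem domino_eq_zero {n : ℕ} {m : Fin n} {z : Fin n → ℝ} (h : IsDominoAt m z)
    (c : Fin n) (h1 : (c : ℕ) ≠ (m : ℕ)) (h2 : (c : ℕ) ≠ (m : ℕ) + 1) : z c = 0 := by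
  unfold IsDominoAt at h
  split at h
  · exact h.2 c h1 h2
  · exact h.2 c (fun hc => h1 (congrArg Fin.val hc))

theorem domino_index_or {n : ℕ} {m : Fin n} {z : Fin n → ℝ} (h : IsDominoAt m z)
    {c : Fin n} (hc : z c ≠ 0) : (c : ℕ) = (m : ℕ) ∨ (c : ℕ) = (m : ℕ) + 1 := by
  by_contra hcon
  push_neg at hcon
  exact hc (domino_eq_zero h c hcon.1 hcon.2)

theorem smul_domino {n : ℕ} {m : Fin n} {z : Fin n → ℝ} (h : IsDominoAt m z)
    {a : ℝ} (ha : a ≠ 0) : IsDominoAt m (a • z) := by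
  unfold IsDominoAt at h ⊢
  split  
  · next hlt =>
    rw [dif_pos hlt] at h
    refine ⟨?_, fun j hj1 hj2 => by simp [h.2 j hj1 hj2]⟩
    have h1 := h.1
    have ha2 : 0 < a * a := by rcases ha.lt_or_gt with h | h <;> nlinarith
    calc (0:ℝ) < (a * a) * (z m * z ⟨(m:ℕ)+1, hlt⟩) := by nlinarith
    _ = (a • z) m * (a • z) ⟨(m:ℕ)+1, hlt⟩ := by simp [Pi.smul_apply]; ring
  · next hlt =>
    rw [dif_neg hlt] at h
    exact ⟨by simp [h.1, ha], fun j hj => by simp [h.2 j hj]⟩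

theorem pos_domino_entries {n : ℕ} {m : Fin n} {z : Fin n → ℝ}
    (h : IsPosDominoAt m z) (hlt : (m : ℕ) + 1 < n) :
    0 < z m ∧ 0 < z ⟨(m : ℕ) + 1, hlt⟩ := by
  obtain ⟨hd, hp⟩ := h
  unfold IsDominoAt at hd
  rw [dif_pos hlt] at hd
  refine ⟨hp, ?_⟩
  nlinarith [hd.1]

theorem oppsign_nonpos_left {n : ℕ} {z1 z2 : Fin n → ℝ} (h : OppSign z1 z2)
    {c : Fin n} (hc : 0 < z2 c) : ∀ x, z1 x ≤ 0 := by
  rcases h with ⟨h1, h2⟩ | ⟨h1, h2⟩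
  · exact absurd hc (not_lt.mpr (h2 c))
  · exact h1

theorem oppsign_nonneg_left {n : ℕ} {z1 z2 : Fin n → ℝ} (h : OppSign z1 z2)
    {c : Fin n} (hc : z2 c < 0) : ∀ x, 0 ≤ z1 x := by
  rcases h with ⟨h1, h2⟩ | ⟨h1, h2⟩
  · exact h1
  · exact absurd hc (not_lt.mpr (h2 c))

theorem oppsign_nonpos_right {n : ℕ} {z1 z2 : Fin n → ℝ} (h : OppSign z1 z2)
    {c : Fin n} (hc : 0 < z1 c) : ∀ x, z2 x ≤ 0 := by
  rcases h with ⟨h1, h2⟩ | ⟨h1, h2⟩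
  · exact h2
  · exact absurd hc (not_lt.mpr (h1 c))

theorem oppsign_nonneg_right {n : ℕ} {z1 z2 : Fin n → ℝ} (h : OppSign z1 z2)
    {c : Fin n} (hc : z1 c < 0) : ∀ x, 0 ≤ z2 x := by
  rcases h with ⟨h1, h2⟩ | ⟨h1, h2⟩
  · exact absurd hc (not_lt.mpr (h1 c))
  · exact h2

theorem list_sum_apply {n : ℕ} (l : List (Fin n → ℝ)) (c : Fin n) :
    l.sum c = ∑ t : Fin l.length, l.get t c := by
  induction l with
  | nil => simp
  | cons z l ih =>
    rw [List.sum_cons, Pi.add_apply, ih]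
    rw [show ∑ t : Fin (z :: l).length, (z :: l).get t c
        = ∑ t : Fin (l.length + 1), (z :: l).get t c from rfl, Fin.sum_univ_succ]
    rfl

/-- 2x2 minors of the pair (d, e) ⊆ a TNN 2-dim subspace all have the same
sign; given one positive minor, all are nonnegative. -/
theorem minor_nonneg_of_TNN {n : ℕ} {V : Submodule ℝ (Fin n → ℝ)}
    (hV : IsTNNSubspace 2 n V) {d e : Fin n → ℝ}
    (hd : d ∈ V) (he : e ∈ V) {a0 b0 a b : Fin n}
    (h0 : a0 < b0) (hab : a < b)
    (hpos0 : 0 < d a0 * e b0 - d b0 * e a0) :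
    0 ≤ d a * e b - d b * e a := by
  obtain ⟨A, -, hspan, hminors⟩ := hV
  have hmem : ∀ x ∈ V, ∃ c : Fin 2 → ℝ, x = c 0 • A 0 + c 1 • A 1 := by
    intro x hx
    rw [← hspan] at hx
    obtain ⟨c, hc⟩ := (Submodule.mem_span_range_iff_exists_fun ℝ).mp hx
    exact ⟨c, by rw [← hc, Fin.sum_univ_two]⟩
  obtain ⟨c, hc⟩ := hmem d hd
  obtain ⟨c', hc'⟩ := hmem e he
  -- all 2x2 minors of A are nonneg
  have hmu : ∀ x y : Fin n, x < y → 0 ≤ A 0 x * A 1 y - A 0 y * A 1 x := by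
    intro x y hxy
    have hsm : StrictMono ![x, y] := by
      intro u v huv
      fin_cases u <;> fin_cases v <;> first | simpa using hxy | exact absurd huv (by simp)
    have := hminors ![x, y] hsm
    rwa [Matrix.det_fin_two, Matrix.submatrix_apply, Matrix.submatrix_apply,
      Matrix.submatrix_apply, Matrix.submatrix_apply] at this
  have key : ∀ x y : Fin n,
      d x * e y - d y * e x
        = (c 0 * c' 1 - c 1 * c' 0) * (A 0 x * A 1 y - A 0 y * A 1 x) := by
    intro x y
    rw [hc, hc']
    simp only [Pi.add_apply, Pi.smul_apply, smul_eq_mul]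
    ring
  have hDelta : 0 < c 0 * c' 1 - c 1 * c' 0 := by
    rcases lt_or_ge 0 (c 0 * c' 1 - c 1 * c' 0) with h | h
    · exact h
    · exfalso
      have h1 := key a0 b0
      nlinarith [hmu a0 b0 h0]
  rw [key a b]
  exact mul_nonneg hDelta.le (hmu a b hab)

end DomAux


namespace DomAux

theorem oppsign_mul_nonpos {n : ℕ} {z1 z2 : Fin n → ℝ} (h : OppSign z1 z2)
    (c x : Fin n) : z1 c * z2 x ≤ 0 := by
  rcases h with ⟨h1, h2⟩ | ⟨h1, h2⟩
  · exact mul_nonpos_of_nonneg_of_nonpos (h1 c) (h2 x)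
  · exact mul_nonpos_of_nonpos_of_nonneg (h1 c) (h2 x)

theorem oppsign_mul_neg {n : ℕ} {z1 z2 : Fin n → ℝ} (h : OppSign z1 z2)
    {c x : Fin n} (hc : z1 c ≠ 0) (hx : z2 x ≠ 0) : z1 c * z2 x < 0 :=
  lt_of_le_of_ne (oppsign_mul_nonpos h c x) (mul_ne_zero hc hx)

theorem no_inv_sep {n : ℕ} {I : Finset (Fin n)} {L : List (Fin n → ℝ)}
    (hlen : L.length = I.card)
    (hsupp : ∀ (t : ℕ) (ht : t < L.length) (ht' : t < I.card),
      L.get ⟨t, ht⟩ (I.orderEmbOfFin rfl ⟨t, ht'⟩) ≠ 0)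
    {r r' : ℕ} (hr : r < L.length) (hr' : r' < L.length) (hrr : r < r')
    {mj mk : Fin n} {u z : Fin n → ℝ} (hu : IsDominoAt mk u) (hz : IsDominoAt mj z)
    (hLr : L.get ⟨r, hr⟩ = u) (hLr' : L.get ⟨r', hr'⟩ = z)
    (hjk : (mj : ℕ) < (mk : ℕ)) : False := by
  have hrI : r < I.card := hlen ▸ hr
  have hrI' : r' < I.card := hlen ▸ hr'
  have h1 : u (I.orderEmbOfFin rfl ⟨r, hrI⟩) ≠ 0 := by
    rw [← hLr]; exact hsupp r hr hrI
  have h2 : z (I.orderEmbOfFin rfl ⟨r', hrI'⟩) ≠ 0 := by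
    rw [← hLr']; exact hsupp r' hr' hrI'
  have hv1 := domino_index_or hu h1
  have hv2 := domino_index_or hz h2
  have hmono : (I.orderEmbOfFin rfl ⟨r, hrI⟩ : Fin n) < I.orderEmbOfFin rfl ⟨r', hrI'⟩ :=
    (I.orderEmbOfFin rfl).strictMono (Fin.mk_lt_mk.mpr hrr)
  have := Fin.lt_iff_val_lt_val.mp hmono
  omega

theorem final_arith {p q P Q : ℝ} (h1 : 0 < p * p + q * p) (h2 : 0 < P * Q + Q * Q)
    (hpq : q * p < 0) (hPQ : P * Q < 0) (hqQ : 0 < q * Q) (hpP : 0 < p * P)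
    (hmin : q * P ≤ p * Q) (hp0 : p ≠ 0) : False := by
  rcases lt_or_gt_of_ne hp0 with hp | hp
  · have hq : 0 < q := by nlinarith
    have hP : P < 0 := by nlinarith
    have hQ : 0 < Q := by nlinarith
    have e1 : q < -p := by nlinarith
    have e2 : -P < Q := by nlinarith
    have := mul_lt_mul'' e1 e2 hq.le (by linarith : (0:ℝ) ≤ -P)
    nlinarith
  · have hq : q < 0 := by nlinarith
    have hP : 0 < P := by nlinarith
    have hQ : Q < 0 := by nlinarith
    have e1 : -q < p := by nlinarith
    have e2 : P < -Q := by nlinarith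
    have := mul_lt_mul'' e1 e2 (by linarith : (0:ℝ) ≤ -q) hP.le
    nlinarith

set_option maxHeartbeats 1000000 in
theorem no_inv_eq {n : ℕ} {I : Finset (Fin n)} {L : List (Fin n → ℝ)} {w : Fin n → ℝ}
    (hlen : L.length = I.card)
    (hdom : ∀ y ∈ L, IsDomino y)
    (hpos : ∀ (t : ℕ) (ht : t < L.length) (ht' : t < I.card),
      0 < w (I.orderEmbOfFin rfl ⟨t, ht'⟩) *
          L.get ⟨t, ht⟩ (I.orderEmbOfFin rfl ⟨t, ht'⟩))
    (halt : ∀ (t : ℕ) (h1 : t < L.length) (h2 : t + 1 < L.length),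
      OppSign (L.get ⟨t, h1⟩) (L.get ⟨t + 1, h2⟩))
    (hsum : ∀ c : Fin n, w c = L.sum c)
    {r r' : ℕ} (hr : r < L.length) (hr' : r' < L.length) (hrr : r < r')
    {i : Fin n} (hi3 : (i : ℕ) + 3 ≤ n)
    {dj dk : Fin n → ℝ} (hdj : IsPosDominoAt i dj) (hdk : IsPosDominoAt i dk)
    {a b : ℝ} (ha : a ≠ 0) (hb : b ≠ 0)
    (hLr : L.get ⟨r, hr⟩ = b • dk) (hLr' : L.get ⟨r', hr'⟩ = a • dj)
    (hminor : dk i * dj ⟨(i : ℕ) + 1, by omega⟩ ≤ dj i * dk ⟨(i : ℕ) + 1, by omega⟩) :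
    False := by
  have hi1 : (i : ℕ) + 1 < n := by omega
  set c1 : Fin n := ⟨(i : ℕ) + 1, hi1⟩ with hc1
  obtain ⟨hdk0, hdk1⟩ := pos_domino_entries hdk hi1
  obtain ⟨hdj0, hdj1⟩ := pos_domino_entries hdj hi1
  set u : Fin n → ℝ := b • dk with hu
  set z : Fin n → ℝ := a • dj with hz
  have hud : IsDominoAt i u := smul_domino hdk.1 hb
  have hzd : IsDominoAt i z := smul_domino hdj.1 ha
  -- embedding facts
  set emb := I.orderEmbOfFin (rfl : I.card = I.card) with hembdef
  have hmono : ∀ (t t' : ℕ) (ht : t < I.card) (ht' : t' < I.card), t < t' →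
      ((emb ⟨t, ht⟩ : Fin n) : ℕ) < ((emb ⟨t', ht'⟩ : Fin n) : ℕ) := by
    intro t t' ht ht' h
    exact Fin.lt_iff_val_lt_val.mp (emb.strictMono (Fin.mk_lt_mk.mpr h))
  have hinj : ∀ (t t' : ℕ) (ht : t < I.card) (ht' : t' < I.card),
      ((emb ⟨t, ht⟩ : Fin n) : ℕ) = ((emb ⟨t', ht'⟩ : Fin n) : ℕ) → t = t' := by
    intro t t' ht ht' h
    by_contra hne
    rcases Nat.lt_or_ge t t' with hlt | hge
    · exact absurd h (Nat.ne_of_lt (hmono t t' ht ht' hlt))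
    · have : t' < t := by omega
      exact absurd h.symm (Nat.ne_of_lt (hmono t' t ht' ht this))
  have hsupp : ∀ (t : ℕ) (ht : t < L.length) (ht' : t < I.card),
      L.get ⟨t, ht⟩ (emb ⟨t, ht'⟩) ≠ 0 := by
    intro t ht ht' h0
    have := hpos t ht ht'
    rw [h0, mul_zero] at this
    exact lt_irrefl 0 this
  have hrI : r < I.card := hlen ▸ hr
  have hrI' : r' < I.card := hlen ▸ hr'
  -- the I-coordinates of positions r and r'
  have hvr : ((emb ⟨r, hrI⟩ : Fin n) : ℕ) = (i : ℕ) ∧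
      ((emb ⟨r', hrI'⟩ : Fin n) : ℕ) = (i : ℕ) + 1 := by
    have h1 : u (emb ⟨r, hrI⟩) ≠ 0 := by rw [← hLr]; exact hsupp r hr hrI
    have h2 : z (emb ⟨r', hrI'⟩) ≠ 0 := by rw [← hLr']; exact hsupp r' hr' hrI'
    have hv1 := domino_index_or hud h1
    have hv2 := domino_index_or hzd h2
    have := hmono r r' hrI hrI' hrr
    omega
  -- r' = r + 1
  have hr'eq : r' = r + 1 := by
    by_contra hne
    have hlt : r + 1 < r' := by omega
    have ht1 : r + 1 < L.length := by omega
    have ht1I : r + 1 < I.card := by omega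
    have hm1 := hmono r (r + 1) hrI ht1I (Nat.lt_succ_self r)
    have hm2 := hmono (r + 1) r' ht1I hrI' hlt
    have h1 : L.get ⟨r + 1, ht1⟩ (emb ⟨r + 1, ht1I⟩) ≠ 0 := hsupp (r + 1) ht1 ht1I
    omega
  subst hr'eq
  have hr1 : r + 1 < L.length := hr'
  -- identify Fin coordinates
  have hIr : emb ⟨r, hrI⟩ = i := Fin.ext hvr.1
  have hIr1 : emb ⟨r + 1, hrI'⟩ = c1 := Fin.ext hvr.2
  -- opposite signs of u and z
  have hOS : OppSign u z := by
    have := halt r hr hr1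
    rwa [hLr, show L.get ⟨r + 1, hr1⟩ = z from hLr'] at this
  -- basic sign products
  have hui : u i ≠ 0 := by
    simp only [hu, Pi.smul_apply, smul_eq_mul]
    exact mul_ne_zero hb (ne_of_gt hdk0)
  have huc1 : u c1 ≠ 0 := by
    simp only [hu, Pi.smul_apply, smul_eq_mul]
    exact mul_ne_zero hb (ne_of_gt hdk1)
  have hzi : z i ≠ 0 := by
    simp only [hz, Pi.smul_apply, smul_eq_mul]
    exact mul_ne_zero ha (ne_of_gt hdj0)
  have hzc1 : z c1 ≠ 0 := by
    simp only [hz, Pi.smul_apply, smul_eq_mul]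
    exact mul_ne_zero ha (ne_of_gt hdj1)
  -- positivity from hpos at r and r+1
  have hwi : 0 < w i * u i := by
    have := hpos r hr hrI
    rwa [hIr, hLr] at this
  have hwc1 : 0 < w c1 * z c1 := by
    have := hpos (r + 1) hr1 hrI'
    rwa [hIr1, show L.get ⟨r + 1, hr1⟩ = z from hLr'] at this
  -- claim (A): other terms at coordinate i have sign opposite to u i
  have hA : ∀ (t : ℕ) (ht : t < L.length), t ≠ r → t ≠ r + 1 →
      L.get ⟨t, ht⟩ i * u i ≤ 0 := by
    intro t ht htr htr1
    set zt := L.get ⟨t, ht⟩ with hzt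
    rcases eq_or_ne (zt i) 0 with h0 | h0
    · rw [h0, zero_mul]
    obtain ⟨m, hm⟩ := hdom zt (by rw [hzt]; exact List.get_mem L ⟨t, ht⟩)
    have htI : t < I.card := hlen ▸ ht
    have hsupt : zt (emb ⟨t, htI⟩) ≠ 0 := hsupp t ht htI
    have hv := domino_index_or hm h0
    have hvt := domino_index_or hm hsupt
    rcases hv with hv | hv
    · -- index of zt is i : t must be r or r + 1
      exfalso
      rcases hvt with hvt | hvt
      · exact htr (hinj t r htI hrI (by omega))
      · exact htr1 (hinj t (r + 1) htI hrI' (by omega))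
    · -- index of zt is i - 1 : t = r - 1 and zt opposite to u
      have hm1 : (m : ℕ) + 1 = (i : ℕ) := hv.symm
      rcases hvt with hvt | hvt
      · -- emb t = m = i - 1, so t = r - 1
        have htltr : t < r := by
          by_contra hge
          have : r ≤ t := by omega
          rcases Nat.lt_or_ge r t with h' | h'
          · have := hmono r t hrI htI h'
            omega
          · have : t = r := by omega
            exact htr this
        have htr1' : t = r - 1 := by
          by_contra hne
          have h2 : t < r - 1 := by omega
          have hr1I : r - 1 < I.card := by omega
          have q1 := hmono t (r - 1) htI hr1I h2
          have q2 := hmono (r - 1) r hr1I hrI (by omega)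
          omega
        have hrpos : 0 < r := by omega
        have hhalt := halt (r - 1) (by omega) (by omega : r - 1 + 1 < L.length)
        have hteq : (⟨t, ht⟩ : Fin L.length) = ⟨r - 1, by omega⟩ := Fin.ext (by simpa using htr1')
        have hreq : (⟨r - 1 + 1, by omega⟩ : Fin L.length) = ⟨r, hr⟩ := Fin.ext (by simp; omega)
        rw [hreq, hLr] at hhalt
        rw [hzt, hteq]
        exact oppsign_mul_nonpos hhalt _ _
      · -- emb t = m + 1 = i : t = r, contradiction
        exact absurd (hinj t r htI hrI (by omega)) htr
  -- claim (B): other terms at coordinate c1 have sign opposite to z c1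
  have hB : ∀ (t : ℕ) (ht : t < L.length), t ≠ r → t ≠ r + 1 →
      L.get ⟨t, ht⟩ c1 * z c1 ≤ 0 := by
    intro t ht htr htr1
    set zt := L.get ⟨t, ht⟩ with hzt
    rcases eq_or_ne (zt c1) 0 with h0 | h0
    · rw [h0, zero_mul]
    obtain ⟨m, hm⟩ := hdom zt (by rw [hzt]; exact List.get_mem L ⟨t, ht⟩)
    have htI : t < I.card := hlen ▸ ht
    have hsupt : zt (emb ⟨t, htI⟩) ≠ 0 := hsupp t ht htI
    have hv := domino_index_or hm h0
    have hvt := domino_index_or hm hsupt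
    rcases hv with hv | hv
    · -- index of zt is i + 1 : t = r + 2
      have hmi : (m : ℕ) = (i : ℕ) + 1 := hv.symm
      rcases hvt with hvt | hvt
      · exact absurd (hinj t (r + 1) htI hrI' (by omega)) htr1
      · -- emb t = i + 2, t = r + 2
        have htgt : r + 1 < t := by
          rcases Nat.lt_or_ge (r + 1) t with h' | h'
          · exact h'
          · exfalso
            rcases Nat.lt_or_ge t (r + 1) with h'' | h''
            · have := hmono t (r + 1) htI hrI' h''
              omega
            · exact htr1 (by omega)
        have hteq2 : t = r + 2 := by
          by_contra hne
          have h2 : r + 2 < t := by omega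
          have hr2I : r + 2 < I.card := by omega
          have q1 := hmono (r + 1) (r + 2) hrI' hr2I (by omega)
          have q2 := hmono (r + 2) t hr2I htI h2
          omega
        have hhalt := halt (r + 1) hr1 (by omega : r + 1 + 1 < L.length)
        have hteq : (⟨t, ht⟩ : Fin L.length) = ⟨r + 1 + 1, by omega⟩ := Fin.ext (by simpa using hteq2)
        rw [show L.get ⟨r + 1, hr1⟩ = z from hLr'] at hhalt
        rw [hzt, hteq]
        have := oppsign_mul_nonpos hhalt c1 c1
        -- this : z c1 * (L.get ⟨r+1+1,_⟩) c1 ≤ 0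
        nlinarith [this]
      -- done
    · -- index of zt is i : t = r or r + 1
      exfalso
      have hmi : (m : ℕ) = (i : ℕ) := by omega
      rcases hvt with hvt | hvt
      · exact htr (hinj t r htI hrI (by omega))
      · exact htr1 (hinj t (r + 1) htI hrI' (by omega))
  -- sum bounds
  have hsum_i : w i * u i ≤ u i * u i + z i * u i := by
    have hfin_ne : (⟨r, hr⟩ : Fin L.length) ≠ ⟨r + 1, hr1⟩ :=
      Fin.ne_of_val_ne (show r ≠ r + 1 by omega)
    have e1 : w i = ∑ t : Fin L.length, L.get t i := by
      rw [hsum i, list_sum_apply]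
    have e2 : w i * u i = ∑ t : Fin L.length, L.get t i * u i := by
      rw [e1, Finset.sum_mul]
    rw [e2]
    rw [← Finset.add_sum_erase _ _ (Finset.mem_univ (⟨r, hr⟩ : Fin L.length))]
    rw [← Finset.add_sum_erase _ _
      (Finset.mem_erase.mpr ⟨hfin_ne.symm, Finset.mem_univ (⟨r + 1, hr1⟩ : Fin L.length)⟩)]
    rw [hLr, show L.get ⟨r + 1, hr1⟩ = z from hLr']
    have : ∑ t ∈ (Finset.univ.erase ⟨r, hr⟩).erase ⟨r + 1, hr1⟩,
        L.get t i * u i ≤ 0 := by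
      apply Finset.sum_nonpos
      intro t htmem
      have hm1 := Finset.mem_erase.mp htmem
      have hm2 := Finset.mem_erase.mp hm1.2
      exact hA t t.isLt (fun h => hm2.1 (Fin.ext h)) (fun h => hm1.1 (Fin.ext h))
    linarith
  have hsum_c1 : w c1 * z c1 ≤ u c1 * z c1 + z c1 * z c1 := by
    have hfin_ne : (⟨r, hr⟩ : Fin L.length) ≠ ⟨r + 1, hr1⟩ :=
      Fin.ne_of_val_ne (show r ≠ r + 1 by omega)
    have e1 : w c1 = ∑ t : Fin L.length, L.get t c1 := by
      rw [hsum c1, list_sum_apply]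
    have e2 : w c1 * z c1 = ∑ t : Fin L.length, L.get t c1 * z c1 := by
      rw [e1, Finset.sum_mul]
    rw [e2]
    rw [← Finset.add_sum_erase _ _ (Finset.mem_univ (⟨r, hr⟩ : Fin L.length))]
    rw [← Finset.add_sum_erase _ _
      (Finset.mem_erase.mpr ⟨hfin_ne.symm, Finset.mem_univ (⟨r + 1, hr1⟩ : Fin L.length)⟩)]
    rw [hLr, show L.get ⟨r + 1, hr1⟩ = z from hLr']
    have : ∑ t ∈ (Finset.univ.erase ⟨r, hr⟩).erase ⟨r + 1, hr1⟩,
        L.get t c1 * z c1 ≤ 0 := by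
      apply Finset.sum_nonpos
      intro t htmem
      have hm1 := Finset.mem_erase.mp htmem
      have hm2 := Finset.mem_erase.mp hm1.2
      exact hB t t.isLt (fun h => hm2.1 (Fin.ext h)) (fun h => hm1.1 (Fin.ext h))
    linarith
  -- final arithmetic contradiction
  have hu_i : u i = b * dk i := by rw [hu]; simp
  have hu_c1 : u c1 = b * dk c1 := by rw [hu]; simp
  have hz_i : z i = a * dj i := by rw [hz]; simp
  have hz_c1 : z c1 = a * dj c1 := by rw [hz]; simp
  have hminor2 : dk i * dj c1 ≤ dj i * dk c1 := hminor
  have h1 : 0 < u i * u i + z i * u i := lt_of_lt_of_le hwi hsum_i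
  have h2 : 0 < u c1 * z c1 + z c1 * z c1 := lt_of_lt_of_le hwc1 hsum_c1
  have hpq : z i * u i < 0 := by
    have := oppsign_mul_neg hOS hui hzi
    nlinarith [this]
  have hPQ : u c1 * z c1 < 0 := oppsign_mul_neg hOS huc1 hzc1
  have hqQ : 0 < z i * z c1 := by
    have heq : z i * z c1 = (a * a) * (dj i * dj c1) := by rw [hz_i, hz_c1]; ring
    have ha2 : 0 < a * a := by rcases ha.lt_or_gt with h | h <;> nlinarith
    rw [heq]
    positivity
  have hpP : 0 < u i * u c1 := by
    have heq : u i * u c1 = (b * b) * (dk i * dk c1) := by rw [hu_i, hu_c1]; ring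
    have hb2 : 0 < b * b := by rcases hb.lt_or_gt with h | h <;> nlinarith
    rw [heq]
    positivity
  have hab : a * b < 0 := by
    have heq : z i * u i = (a * b) * (dj i * dk i) := by rw [hz_i, hu_i]; ring
    nlinarith [mul_pos hdj0 hdk0]
  have hmin' : z i * u c1 ≤ u i * z c1 := by
    have e1 : u i * z c1 = (a * b) * (dk i * dj c1) := by rw [hu_i, hz_c1]; ring
    have e2 : z i * u c1 = (a * b) * (dj i * dk c1) := by rw [hz_i, hu_c1]; ring
    rw [e1, e2]
    nlinarith [hminor2, hab]
  exact final_arith h1 h2 hpq hPQ hqQ hpP hmin' hui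

end DomAux




namespace DomAux

theorem barVec_apply_ne {n : ℕ} (v : Fin n → ℝ) {c : Fin n} (h : (c : ℕ) ≠ n - 1) :
    barVec v c = v c := if_neg h

theorem mem_span_left {n : ℕ} {V : Submodule ℝ (Fin n → ℝ)} {d e : Fin n → ℝ}
    (h : V = Submodule.span ℝ {d, e}) : d ∈ V := by
  rw [h]; exact Submodule.subset_span (Set.mem_insert _ _)

theorem mem_span_right {n : ℕ} {V : Submodule ℝ (Fin n → ℝ)} {d e : Fin n → ℝ}
    (h : V = Submodule.span ℝ {d, e}) : e ∈ V := by
  rw [h]; exact Submodule.subset_span (Set.mem_insert_of_mem _ rfl)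

theorem orthodox_minor {n : ℕ} {V : Submodule ℝ (Fin n → ℝ)}
    (hV : IsTNNSubspace 2 n V) {d e d1 d2 d3 d4 : Fin n → ℝ}
    {i1 i2 i3 i4 : Fin n}
    (h1 : IsPosDominoAt i1 d1) (h2 : IsPosDominoAt i2 d2)
    (h3 : IsPosDominoAt i3 d3) (h4 : IsPosDominoAt i4 d4)
    (o1 : (i1 : ℕ) + 1 < (i2 : ℕ)) (o2 : (i2 : ℕ) ≤ (i3 : ℕ))
    (o3 : (i3 : ℕ) + 1 < (i4 : ℕ)) (o4 : (i4 : ℕ) + 3 ≤ n)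
    (hVeq : V = Submodule.span ℝ {d, e})
    (hbd : barVec d = d1 + d2) (hdneg : ∀ j : Fin n, (j : ℕ) = n - 1 → d j < 0)
    (hbe : barVec e = d3 + d4) (hepos : ∀ j : Fin n, (j : ℕ) = n - 1 → 0 < e j)
    (heq23 : (i2 : ℕ) = (i3 : ℕ)) (hlt : (i2 : ℕ) + 1 < n) :
    d3 i2 * d2 ⟨(i2 : ℕ) + 1, hlt⟩ ≤ d2 i2 * d3 ⟨(i2 : ℕ) + 1, hlt⟩ := by
  set c1 : Fin n := ⟨(i2 : ℕ) + 1, hlt⟩ with hc1def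
  have hc1val : (c1 : ℕ) = (i2 : ℕ) + 1 := rfl
  have hn : 3 ≤ n := by omega
  set last : Fin n := ⟨n - 1, by omega⟩ with hlastdef
  have hlastval : (last : ℕ) = n - 1 := rfl
  -- values of d and e away from the last coordinate
  have hd_at : ∀ c : Fin n, (c : ℕ) ≠ n - 1 → d c = d1 c + d2 c := by
    intro c hc
    have := congrFun hbd c
    rwa [barVec_apply_ne d hc] at this
  have he_at : ∀ c : Fin n, (c : ℕ) ≠ n - 1 → e c = d3 c + d4 c := by
    intro c hc
    have := congrFun hbe c
    rwa [barVec_apply_ne e hc] at this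
  have hdmem : d ∈ V := mem_span_left hVeq
  have hemem : e ∈ V := mem_span_right hVeq
  -- the base positive minor at columns (i1, last)
  have hi1last : i1 < last := by
    rw [Fin.lt_iff_val_lt_val]; omega
  have hic1 : i2 < c1 := by
    rw [Fin.lt_iff_val_lt_val]; exact Nat.lt_succ_self _
  have hd_i1 : d i1 = d1 i1 := by
    rw [hd_at i1 (by omega)]
    rw [domino_eq_zero h2.1 i1 (by omega) (by omega), add_zero]
  have he_i1 : e i1 = 0 := by
    rw [he_at i1 (by omega)]
    rw [domino_eq_zero h3.1 i1 (by omega) (by omega),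
      domino_eq_zero h4.1 i1 (by omega) (by omega), add_zero]
  have hd1pos : 0 < d1 i1 := h1.2
  have hdlast : d last < 0 := hdneg last rfl
  have helast : 0 < e last := hepos last rfl
  have hpos0 : 0 < d i1 * e last - d last * e i1 := by
    rw [hd_i1, he_i1]
    nlinarith
  have hminor := minor_nonneg_of_TNN hV hdmem hemem hi1last hic1 hpos0
  -- compute the target minor entries
  have hd_i : d i2 = d2 i2 := by
    rw [hd_at i2 (by omega)]
    rw [domino_eq_zero h1.1 i2 (by omega) (by omega), zero_add]
  have hd_c1 : d c1 = d2 c1 := by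
    rw [hd_at c1 (by omega)]
    rw [domino_eq_zero h1.1 c1 (by omega) (by omega), zero_add]
  have he_i : e i2 = d3 i2 := by
    rw [he_at i2 (by omega)]
    rw [domino_eq_zero h4.1 i2 (by omega) (by omega), add_zero]
  have he_c1 : e c1 = d3 c1 := by
    rw [he_at c1 (by omega)]
    rw [domino_eq_zero h4.1 c1 (by omega) (by omega), add_zero]
  rw [hd_i, hd_c1, he_i, he_c1] at hminor
  linarith

theorem deviant_minor {n : ℕ} {V : Submodule ℝ (Fin n → ℝ)}
    (hV : IsTNNSubspace 2 n V) {d e d1 d2 d3 d4 : Fin n → ℝ}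
    {i1 i2 i3 i4 : Fin n}
    (h1 : IsPosDominoAt i1 d1) (h2 : IsPosDominoAt i2 d2)
    (h3 : IsPosDominoAt i3 d3) (h4 : IsPosDominoAt i4 d4)
    (o1 : (i1 : ℕ) < (i2 : ℕ)) (o2 : (i2 : ℕ) + 1 < (i3 : ℕ))
    (o3 : (i3 : ℕ) ≤ (i4 : ℕ)) (o4 : (i4 : ℕ) + 3 ≤ n)
    (hVeq : V = Submodule.span ℝ {d, e})
    (hbd : barVec d = d1 - d4) (hdneg : ∀ j : Fin n, (j : ℕ) = n - 1 → d j < 0)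
    (hee : e = d1 + d2 + d3)
    (heq34 : (i3 : ℕ) = (i4 : ℕ)) (hlt : (i3 : ℕ) + 1 < n) :
    d4 i3 * d3 ⟨(i3 : ℕ) + 1, hlt⟩ ≤ d3 i3 * d4 ⟨(i3 : ℕ) + 1, hlt⟩ := by
  set c1 : Fin n := ⟨(i3 : ℕ) + 1, hlt⟩ with hc1def
  have hc1val : (c1 : ℕ) = (i3 : ℕ) + 1 := rfl
  have hn : 3 ≤ n := by omega
  set last : Fin n := ⟨n - 1, by omega⟩ with hlastdef
  have hlastval : (last : ℕ) = n - 1 := rfl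
  have hd_at : ∀ c : Fin n, (c : ℕ) ≠ n - 1 → d c = d1 c - d4 c := by
    intro c hc
    have := congrFun hbd c
    rwa [barVec_apply_ne d hc] at this
  have he_at : ∀ c : Fin n, e c = d1 c + d2 c + d3 c := fun c => congrFun hee c
  have hdmem : d ∈ V := mem_span_left hVeq
  have hemem : e ∈ V := mem_span_right hVeq
  have hi1last : i1 < last := by
    rw [Fin.lt_iff_val_lt_val]; omega
  have hic1 : i3 < c1 := by
    rw [Fin.lt_iff_val_lt_val]; exact Nat.lt_succ_self _
  have he_i1 : e i1 = d1 i1 := by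
    rw [he_at i1]
    rw [domino_eq_zero h2.1 i1 (by omega) (by omega),
      domino_eq_zero h3.1 i1 (by omega) (by omega), add_zero, add_zero]
  have he_last : e last = 0 := by
    rw [he_at last]
    rw [domino_eq_zero h1.1 last (by omega) (by omega),
      domino_eq_zero h2.1 last (by omega) (by omega),
      domino_eq_zero h3.1 last (by omega) (by omega)]
    ring
  have hd1pos : 0 < d1 i1 := h1.2
  have hdlast : d last < 0 := hdneg last rfl
  have hpos0 : 0 < d i1 * e last - d last * e i1 := by
    rw [he_i1, he_last]
    nlinarith
  have hminor := minor_nonneg_of_TNN hV hdmem hemem hi1last hic1 hpos0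
  have hd_i : d i3 = -d4 i3 := by
    rw [hd_at i3 (by omega)]
    rw [domino_eq_zero h1.1 i3 (by omega) (by omega)]
    ring
  have hd_c1 : d c1 = -d4 c1 := by
    rw [hd_at c1 (by omega)]
    rw [domino_eq_zero h1.1 c1 (by omega) (by omega)]
    ring
  have he_i : e i3 = d3 i3 := by
    rw [he_at i3]
    rw [domino_eq_zero h1.1 i3 (by omega) (by omega),
      domino_eq_zero h2.1 i3 (by omega) (by omega)]
    ring
  have he_c1 : e c1 = d3 c1 := by
    rw [he_at c1]
    rw [domino_eq_zero h1.1 c1 (by omega) (by omega),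
      domino_eq_zero h2.1 c1 (by omega) (by omega)]
    ring
  rw [hd_i, hd_c1, he_i, he_c1] at hminor
  linarith

end DomAux


namespace DomAux

set_option maxHeartbeats 1000000 in
theorem family_no_inversion {n : ℕ} {V : Submodule ℝ (Fin n → ℝ)}
    (hV : IsTNNSubspace 2 n V) {d e d1 d2 d3 d4 : Fin n → ℝ}
    (hOD : OrthodoxWith V d e d1 d2 d3 d4 ∨ DeviantWith V d e d1 d2 d3 d4)
    (α : Fin 4 → ℝ) {I : Finset (Fin n)} {L : List (Fin n → ℝ)} {w : Fin n → ℝ}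
    (hlen : L.length = I.card)
    (hdom : ∀ y ∈ L, IsDomino y)
    (hpos : ∀ (t : ℕ) (ht : t < L.length) (ht' : t < I.card),
      0 < w (I.orderEmbOfFin rfl ⟨t, ht'⟩) *
          L.get ⟨t, ht⟩ (I.orderEmbOfFin rfl ⟨t, ht'⟩))
    (halt : ∀ (t : ℕ) (h1 : t < L.length) (h2 : t + 1 < L.length),
      OppSign (L.get ⟨t, h1⟩) (L.get ⟨t + 1, h2⟩))
    (hsum : ∀ c : Fin n, w c = L.sum c)
    {r r' : ℕ} (hr : r < L.length) (hr' : r' < L.length) (hrr : r < r')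
    (j k : Fin 4) (hjk : j < k)
    (hLr : L.get ⟨r, hr⟩ = α k • ![d1, d2, d3, d4] k)
    (hLr' : L.get ⟨r', hr'⟩ = α j • ![d1, d2, d3, d4] j)
    (hk0 : α k • ![d1, d2, d3, d4] k ≠ 0)
    (hj0 : α j • ![d1, d2, d3, d4] j ≠ 0) : False := by
  have hsupp : ∀ (t : ℕ) (ht : t < L.length) (ht' : t < I.card),
      L.get ⟨t, ht⟩ (I.orderEmbOfFin rfl ⟨t, ht'⟩) ≠ 0 := by
    intro t ht ht' h0
    have := hpos t ht ht'
    rw [h0, mul_zero] at this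
    exact lt_irrefl 0 this
  have hak : α k ≠ 0 := by intro h; rw [h, zero_smul] at hk0; exact hk0 rfl
  have haj : α j ≠ 0 := by intro h; rw [h, zero_smul] at hj0; exact hj0 rfl
  rcases hOD with hO | hD
  · obtain ⟨⟨i1, i2, i3, i4, h1, h2, h3, h4, o1, o2, o3, o4⟩, -, hVeq, hbd, hdneg, hbe, hepos⟩ := hO
    have sep : ∀ {mj mk : Fin n} {dj dk : Fin n → ℝ},
        IsPosDominoAt mj dj → IsPosDominoAt mk dk → (mj : ℕ) < (mk : ℕ) →
        L.get ⟨r, hr⟩ = α k • dk → L.get ⟨r', hr'⟩ = α j • dj → False := by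
      intro mj mk dj dk hdj hdk hlt hLrr hLrr'
      exact no_inv_sep hlen hsupp hr hr' hrr (smul_domino hdk.1 hak)
        (smul_domino hdj.1 haj) hLrr hLrr' hlt
    fin_cases j <;> fin_cases k <;>
      first
      | exact absurd hjk (by decide)
      | exact sep h1 h2 (by omega) hLr hLr'
      | exact sep h1 h3 (by omega) hLr hLr'
      | exact sep h1 h4 (by omega) hLr hLr'
      | exact sep h3 h4 (by omega) hLr hLr'
      | exact sep h2 h4 (by omega) hLr hLr'
      | -- the special pair (1, 2) : d2 and d3
        (rcases Nat.lt_or_ge (i2 : ℕ) (i3 : ℕ) with hlt | hge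
         · exact sep h2 h3 hlt hLr hLr'
         · have heq : (i2 : ℕ) = (i3 : ℕ) := by omega
           have hlt2 : (i2 : ℕ) + 1 < n := by omega
           have hmin := orthodox_minor hV h1 h2 h3 h4 o1 o2 o3 o4 hVeq hbd hdneg
             hbe hepos heq hlt2
           rw [show i3 = i2 from Fin.ext heq.symm] at h3
           exact no_inv_eq hlen hdom hpos halt hsum hr hr' hrr
             (show (i2 : ℕ) + 3 ≤ n by omega) h2 h3 haj hak hLr hLr' hmin)
  · obtain ⟨⟨i1, i2, i3, i4, h1, h2, h3, h4, o1, o2, o3, o4⟩, -, hVeq, hbd, hdneg, hee⟩ := hD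
    have sep : ∀ {mj mk : Fin n} {dj dk : Fin n → ℝ},
        IsPosDominoAt mj dj → IsPosDominoAt mk dk → (mj : ℕ) < (mk : ℕ) →
        L.get ⟨r, hr⟩ = α k • dk → L.get ⟨r', hr'⟩ = α j • dj → False := by
      intro mj mk dj dk hdj hdk hlt hLrr hLrr'
      exact no_inv_sep hlen hsupp hr hr' hrr (smul_domino hdk.1 hak)
        (smul_domino hdj.1 haj) hLrr hLrr' hlt
    fin_cases j <;> fin_cases k <;>
      first
      | exact absurd hjk (by decide)
      | exact sep h1 h2 (by omega) hLr hLr'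
      | exact sep h1 h3 (by omega) hLr hLr'
      | exact sep h1 h4 (by omega) hLr hLr'
      | exact sep h2 h3 (by omega) hLr hLr'
      | exact sep h2 h4 (by omega) hLr hLr'
      | -- the special pair (2, 3) : d3 and d4
        (rcases Nat.lt_or_ge (i3 : ℕ) (i4 : ℕ) with hlt | hge
         · exact sep h3 h4 hlt hLr hLr'
         · have heq : (i3 : ℕ) = (i4 : ℕ) := by omega
           have hlt2 : (i3 : ℕ) + 1 < n := by omega
           have hmin := deviant_minor hV h1 h2 h3 h4 o1 o2 o3 o4 hVeq hbd hdneg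
             hee heq hlt2
           rw [show i4 = i3 from Fin.ext heq.symm] at h4
           exact no_inv_eq hlen hdom hpos halt hsum hr hr' hrr
             (show (i3 : ℕ) + 3 ≤ n by omega) h3 h4 haj hak hLr hLr' hmin)

end DomAux


namespace DomAux

theorem pair_sublist_four {β : Type*} {a b x0 x1 x2 x3 : β}
    (h : List.Sublist [a, b] [x0, x1, x2, x3]) :
    ∃ j k : Fin 4, j < k ∧ ![x0, x1, x2, x3] j = a ∧ ![x0, x1, x2, x3] k = b := by
  rcases ShufAux.pair_sub_cons h with ⟨rfl, hb⟩ | h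
  · simp only [List.mem_cons, List.not_mem_nil, or_false] at hb
    rcases hb with rfl | rfl | rfl
    · exact ⟨0, 1, by decide, rfl, rfl⟩
    · exact ⟨0, 2, by decide, rfl, rfl⟩
    · exact ⟨0, 3, by decide, rfl, rfl⟩
  rcases ShufAux.pair_sub_cons h with ⟨rfl, hb⟩ | h
  · simp only [List.mem_cons, List.not_mem_nil, or_false] at hb
    rcases hb with rfl | rfl
    · exact ⟨1, 2, by decide, rfl, rfl⟩
    · exact ⟨1, 3, by decide, rfl, rfl⟩
  rcases ShufAux.pair_sub_cons h with ⟨rfl, hb⟩ | h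
  · simp only [List.mem_cons, List.not_mem_nil, or_false] at hb
    rcases hb with rfl
    exact ⟨2, 3, by decide, rfl, rfl⟩
  · exact absurd h.length_le (by simp)

theorem filter_ne_zero_sum {M : Type*} [AddCommMonoid M] [DecidableEq M] (l : List M) :
    (l.filter (fun x => decide (x ≠ 0))).sum = l.sum := by
  induction l with
  | nil => rfl
  | cons x l ih =>
    rw [List.filter_cons]
    by_cases hx : x = 0
    · subst hx
      rw [if_neg (by simp), List.sum_cons, zero_add]
      exact ih
    · rw [if_pos (by simp [hx]), List.sum_cons, List.sum_cons, ih]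

theorem barVec_add {n : ℕ} (v v' : Fin n → ℝ) :
    barVec (v + v') = barVec v + barVec v' := by
  funext c
  simp only [barVec, Pi.add_apply]
  split <;> simp

theorem domSeq_get {n : ℕ} (α : Fin 4 → ℝ) (d1 d2 d3 d4 : Fin n → ℝ) (k : Fin 4) :
    ![α 0 • d1, α 1 • d2, α 2 • d3, α 3 • d4] k = α k • ![d1, d2, d3, d4] k := by
  fin_cases k <;> rfl

theorem domSeq_sum {n : ℕ} (α : Fin 4 → ℝ) (d1 d2 d3 d4 : Fin n → ℝ) :
    (domSeq α d1 d2 d3 d4).sum = α 0 • d1 + α 1 • d2 + α 2 • d3 + α 3 • d4 := by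
  simp [domSeq]
  abel

end DomAux


/-- Lemma 10.8: let `v ∈ V`, `v' ∈ V'` (each orthodox or deviant) with
`Dom_V(v)`, `Dom_{V'}(v')` the corresponding domino sequences, and let `D` be the
multiset of nonzero dominoes among their eight entries (whose sum is the vector
`v + v'` with last coordinate zeroed). Then any `I`-alternating domino sequence
for this sum with respect to `D` using all dominoes of `D` is obtained by shuffling
`Dom_V(v)` and `Dom_{V'}(v')` and deleting the zero dominoes. -/
theorem alt_seq_is_shuffle (n : ℕ) (V V' : Submodule ℝ (Fin n → ℝ))
    (hV : IsTNNSubspace 2 n V) (hV' : IsTNNSubspace 2 n V')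
    (d e d1 d2 d3 d4 d' e' d1' d2' d3' d4' : Fin n → ℝ)
    (hOD : OrthodoxWith V d e d1 d2 d3 d4 ∨ DeviantWith V d e d1 d2 d3 d4)
    (hOD' : OrthodoxWith V' d' e' d1' d2' d3' d4' ∨
      DeviantWith V' d' e' d1' d2' d3' d4')
    (v v' : Fin n → ℝ) (hv : v ∈ V) (hv' : v' ∈ V')
    (α α' : Fin 4 → ℝ)
    (hα : barVec v = α 0 • d1 + α 1 • d2 + α 2 • d3 + α 3 • d4)
    (hα' : barVec v' = α' 0 • d1' + α' 1 • d2' + α' 2 • d3' + α' 3 • d4')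
    (I : Finset (Fin n)) (L : List (Fin n → ℝ))
    (hL : IsAltDominoSeq
      (↑((domSeq α d1 d2 d3 d4 ++ domSeq α' d1' d2' d3' d4').filter
          (fun x => decide (x ≠ 0))))
      (barVec (v + v')) I L)
    (hall : (↑L : Multiset (Fin n → ℝ)) =
      (↑((domSeq α d1 d2 d3 d4 ++ domSeq α' d1' d2' d3' d4').filter
          (fun x => decide (x ≠ 0))))) :
    ∃ M : List (Fin n → ℝ),
      Shuffle (domSeq α d1 d2 d3 d4) (domSeq α' d1' d2' d3' d4') M ∧
      L = M.filter (fun x => decide (x ≠ 0)) := by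

  classical
  obtain ⟨hlen, hsub, hdom, hposL, haltL⟩ := hL
  set p : (Fin n → ℝ) → Bool := fun x => decide (x ≠ 0) with hp
  set A0 := domSeq α d1 d2 d3 d4 with hA0
  set B0 := domSeq α' d1' d2' d3' d4' with hB0
  set w := barVec (v + v') with hw
  -- the sum of L is w
  have hsum : ∀ c : Fin n, w c = L.sum c := by
    have h1 : (L.sum : Fin n → ℝ) = ((A0 ++ B0).filter p).sum := by
      have := congrArg Multiset.sum hall
      simpa using this
    have h2 : ((A0 ++ B0).filter p).sum = A0.sum + B0.sum := by
      rw [hp, DomAux.filter_ne_zero_sum, List.sum_append]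
    have h3 : w = L.sum := by
      rw [h1, h2, hw, DomAux.barVec_add, hA0, hB0, DomAux.domSeq_sum,
        DomAux.domSeq_sum, hα, hα']
    intro c
    rw [h3]
  -- no inversions with respect to A0's filtered list
  have hCA : ∀ a b, List.Sublist [a, b] (A0.filter p) → List.Sublist [b, a] L → False := by
    intro a b hab hba
    have habA0 : List.Sublist [a, b] A0 := hab.trans List.filter_sublist
    have hmema : a ∈ A0.filter p := hab.subset (by simp)
    have hmemb : b ∈ A0.filter p := hab.subset (by simp)
    have ha0 : a ≠ 0 := by simpa [hp] using (List.mem_filter.mp hmema).2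
    have hb0 : b ≠ 0 := by simpa [hp] using (List.mem_filter.mp hmemb).2
    obtain ⟨j, k, hjk, hja, hkb⟩ := DomAux.pair_sublist_four (by rw [hA0] at habA0; exact habA0)
    obtain ⟨r, r', hr, hr', hrr, hgr, hgr'⟩ := ShufAux.sublist_pair_get L hba
    rw [DomAux.domSeq_get] at hja hkb
    exact DomAux.family_no_inversion hV hOD α hlen hdom hposL haltL hsum hr hr' hrr j k hjk
      (by rw [hgr, ← hkb]) (by rw [hgr', ← hja])
      (by rw [hkb]; exact hb0) (by rw [hja]; exact ha0)
  have hCB : ∀ a b, List.Sublist [a, b] (B0.filter p) → List.Sublist [b, a] L → False := by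
    intro a b hab hba
    have habB0 : List.Sublist [a, b] B0 := hab.trans List.filter_sublist
    have hmema : a ∈ B0.filter p := hab.subset (by simp)
    have hmemb : b ∈ B0.filter p := hab.subset (by simp)
    have ha0 : a ≠ 0 := by simpa [hp] using (List.mem_filter.mp hmema).2
    have hb0 : b ≠ 0 := by simpa [hp] using (List.mem_filter.mp hmemb).2
    obtain ⟨j, k, hjk, hja, hkb⟩ := DomAux.pair_sublist_four (by rw [hB0] at habB0; exact habB0)
    obtain ⟨r, r', hr, hr', hrr, hgr, hgr'⟩ := ShufAux.sublist_pair_get L hba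
    rw [DomAux.domSeq_get] at hja hkb
    exact DomAux.family_no_inversion hV' hOD' α' hlen hdom hposL haltL hsum hr hr' hrr j k hjk
      (by rw [hgr, ← hkb]) (by rw [hgr', ← hja])
      (by rw [hkb]; exact hb0) (by rw [hja]; exact ha0)
  have hms : (↑L : Multiset (Fin n → ℝ)) = ↑(A0.filter p) + ↑(B0.filter p) := by
    rw [hall]
    rw [show (A0 ++ B0).filter p = A0.filter p ++ B0.filter p from List.filter_append _ _]
    simp
  have hsh : Shuffle (A0.filter p) (B0.filter p) L :=
    ShufAux.shuffle_of_no_inversion L (A0.filter p) (B0.filter p) hms hCA hCB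
  obtain ⟨M, hM, hMf⟩ := ShufAux.shuffle_filter_lift p L A0 B0 hsh
  exact ⟨M, hM, hMf.symm⟩
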